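/- Let R be a commutative ring, p and q finite types, D : Matrix p q R and F : Matrix q p R. With w₁ = fromBlocks 1 0 (−2F) (−1), w₂ = fromBlocks (−1) (−2D) 0 1, the Coxeter transformation C = w₂ * w₁, and B = fromBlocks 0 (−2D) (−2F) 0, the following identity holds in the polynomial ring R[t]: det(t² • 1 − C) = det((1 + t²) • 1 − t • B), where the matrices are mapped into Matrix (p ⊕ q) (p ⊕ q) R[t] via the constant embedding. (This identifies the characteristic polynomial of the Coxeter transformation evaluated at t² with det((1+t²)I − tB), the key step in the generalized Ebeling theorem.) -/
import Mathlib


/-- For the Coxeter transformation `C = w₂ * w₁` and the generalized McKay (adjacency)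
matrix `B` of a bipartite block setup given by `D : Matrix p q R`, `F : Matrix q p R`,
the identity `det(t² • 1 − C) = det((1 + t²) • 1 − t • B)` holds in `R[t]`:
the characteristic polynomial of the Coxeter transformation evaluated at `t²` equals
`det((1 + t²)I − tB)`. -/
theorem charpoly_coxeter_eq_det_mckay (R : Type*) [CommRing R]
    (p q : Type*) [Fintype p] [Fintype q] [DecidableEq p] [DecidableEq q]
    (D : Matrix p q R) (F : Matrix q p R)
    (w₁ w₂ C B : Matrix (p ⊕ q) (p ⊕ q) R)
    (hw₁ : w₁ = Matrix.fromBlocks 1 0 (-(2 • F)) (-1))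
    (hw₂ : w₂ = Matrix.fromBlocks (-1) (-(2 • D)) 0 1)
    (hC : C = w₂ * w₁)
    (hB : B = Matrix.fromBlocks 0 (-(2 • D)) (-(2 • F)) 0) :
    ((Polynomial.X : Polynomial R) ^ 2 • (1 : Matrix (p ⊕ q) (p ⊕ q) (Polynomial R))
        - C.map Polynomial.C).det
      = ((1 + (Polynomial.X : Polynomial R) ^ 2) •
            (1 : Matrix (p ⊕ q) (p ⊕ q) (Polynomial R))
          - (Polynomial.X : Polynomial R) • B.map Polynomial.C).det := by
  subst hw₁ hw₂ hC hB
  set t : Polynomial R := Polynomial.X with ht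
  set d : Matrix p q (Polynomial R) := (2 • D).map Polynomial.C with hd
  set f : Matrix q p (Polynomial R) := (2 • F).map Polynomial.C with hf
  -- the mapped reflections
  have hw1m : (Matrix.fromBlocks 1 0 (-(2 • F)) (-1) : Matrix (p ⊕ q) (p ⊕ q) R).map
      Polynomial.C = Matrix.fromBlocks 1 0 (-f) (-1) := by
    ext (i|i) (j|j) <;>
      simp [hf, Matrix.fromBlocks, Matrix.map_apply, Matrix.one_apply, apply_ite]
  have hw2m : (Matrix.fromBlocks (-1) (-(2 • D)) 0 1 : Matrix (p ⊕ q) (p ⊕ q) R).map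
      Polynomial.C = Matrix.fromBlocks (-1) (-d) 0 1 := by
    ext (i|i) (j|j) <;>
      simp [hd, Matrix.fromBlocks, Matrix.map_apply, Matrix.one_apply, apply_ite]
  have hBm : (Matrix.fromBlocks 0 (-(2 • D)) (-(2 • F)) 0 : Matrix (p ⊕ q) (p ⊕ q) R).map
      Polynomial.C = Matrix.fromBlocks 0 (-d) (-f) 0 := by
    ext (i|i) (j|j) <;>
      simp [hd, hf, Matrix.fromBlocks, Matrix.map_apply, Matrix.one_apply, apply_ite]
  set W : Matrix (p ⊕ q) (p ⊕ q) (Polynomial R) := Matrix.fromBlocks (-1) (-d) 0 1 with hW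
  set M : Matrix (p ⊕ q) (p ⊕ q) (Polynomial R) :=
    Matrix.fromBlocks (-(t ^ 2 • 1) - 1) (-(t ^ 2 • d)) f (t ^ 2 • 1 + 1) with hM
  set J : Matrix (p ⊕ q) (p ⊕ q) (Polynomial R) := Matrix.fromBlocks (-1) 0 0 1 with hJ
  set Y : Matrix (p ⊕ q) (p ⊕ q) (Polynomial R) :=
    Matrix.fromBlocks (t ^ 2 • 1 + 1) (-(t • d)) (-(t • f)) (t ^ 2 • 1 + 1) with hY
  set T : Matrix (p ⊕ q) (p ⊕ q) (Polynomial R) := Matrix.fromBlocks 1 0 0 (t • 1) with hT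
  -- Step 1: LHS matrix equals W * M
  have E1 : t ^ 2 • (1 : Matrix (p ⊕ q) (p ⊕ q) (Polynomial R))
      - (Matrix.fromBlocks (-1) (-(2 • D)) 0 1 * Matrix.fromBlocks 1 0 (-(2 • F)) (-1)
          : Matrix (p ⊕ q) (p ⊕ q) R).map Polynomial.C = W * M := by
    rw [Matrix.map_mul, hw1m, hw2m, hW, hM, Matrix.fromBlocks_multiply,
      Matrix.fromBlocks_multiply, ← Matrix.fromBlocks_one, Matrix.fromBlocks_smul,
      sub_eq_add_neg, Matrix.fromBlocks_neg, Matrix.fromBlocks_add, Matrix.fromBlocks_inj]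
    refine ⟨?_, ?_, ?_, ?_⟩ <;>
      simp only [Matrix.neg_mul, Matrix.mul_neg, Matrix.one_mul, Matrix.mul_one,
        Matrix.zero_mul, Matrix.mul_zero, Matrix.smul_mul, Matrix.mul_smul, smul_smul,
        neg_neg, neg_zero, add_zero, zero_add, smul_zero, sub_eq_add_neg, neg_add,
        neg_smul, smul_neg, Matrix.add_mul, Matrix.mul_add] <;>
      module
  have E2 : T * (M * J) = Y * T := by
    rw [hT, hM, hJ, hY, Matrix.fromBlocks_multiply, Matrix.fromBlocks_multiply,
      Matrix.fromBlocks_multiply, Matrix.fromBlocks_inj]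
    refine ⟨?_, ?_, ?_, ?_⟩ <;>
      simp only [Matrix.neg_mul, Matrix.mul_neg, Matrix.one_mul, Matrix.mul_one,
        Matrix.zero_mul, Matrix.mul_zero, Matrix.smul_mul, Matrix.mul_smul, smul_smul,
        neg_neg, neg_zero, add_zero, zero_add, smul_zero, sub_eq_add_neg, neg_add,
        neg_smul, smul_neg, Matrix.add_mul, Matrix.mul_add] <;>
      module
  have E3 : J * Y * J = (1 + t ^ 2) • (1 : Matrix (p ⊕ q) (p ⊕ q) (Polynomial R))
      - t • (Matrix.fromBlocks 0 (-(2 • D)) (-(2 • F)) 0 : Matrix (p ⊕ q) (p ⊕ q) R).map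
          Polynomial.C := by
    rw [hBm, hJ, hY, Matrix.fromBlocks_multiply, Matrix.fromBlocks_multiply,
      ← Matrix.fromBlocks_one, Matrix.fromBlocks_smul, Matrix.fromBlocks_smul,
      sub_eq_add_neg, Matrix.fromBlocks_neg, Matrix.fromBlocks_add, Matrix.fromBlocks_inj]
    refine ⟨?_, ?_, ?_, ?_⟩ <;>
      simp only [Matrix.neg_mul, Matrix.mul_neg, Matrix.one_mul, Matrix.mul_one,
        Matrix.zero_mul, Matrix.mul_zero, Matrix.smul_mul, Matrix.mul_smul, smul_smul,
        neg_neg, neg_zero, add_zero, zero_add, smul_zero, sub_eq_add_neg, neg_add,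
        neg_smul, smul_neg, Matrix.add_mul, Matrix.mul_add] <;>
      module
  have JJ : J * J = 1 := by
    rw [hJ, Matrix.fromBlocks_multiply, ← Matrix.fromBlocks_one, Matrix.fromBlocks_inj]
    refine ⟨?_, ?_, ?_, ?_⟩ <;> simp
  -- determinants

  have detW : W.det = (-1 : Matrix p p (Polynomial R)).det := by
    rw [hW, Matrix.det_fromBlocks_zero₂₁, Matrix.det_one, mul_one]
  have detJ : J.det = (-1 : Matrix p p (Polynomial R)).det := by
    rw [hJ, Matrix.det_fromBlocks_zero₂₁, Matrix.det_one, mul_one]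
  have detT : T.det = t ^ Fintype.card q := by
    rw [hT, Matrix.det_fromBlocks_zero₂₁, Matrix.det_one, one_mul, Matrix.det_smul,
      Matrix.det_one, mul_one]
  have detXY : (M * J).det = Y.det := by
    have h := congrArg Matrix.det E2
    rw [Matrix.det_mul T, Matrix.det_mul Y, detT, mul_comm Y.det] at h
    exact ((Polynomial.monic_X_pow (Fintype.card q)).isRegular.left) h
  calc (t ^ 2 • (1 : Matrix (p ⊕ q) (p ⊕ q) (Polynomial R))
        - (Matrix.fromBlocks (-1) (-(2 • D)) 0 1 * Matrix.fromBlocks 1 0 (-(2 • F)) (-1)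
            : Matrix (p ⊕ q) (p ⊕ q) R).map Polynomial.C).det
      = W.det * M.det := by rw [E1, Matrix.det_mul]
    _ = M.det * J.det := by rw [detW, ← detJ, mul_comm]
    _ = (M * J).det := (Matrix.det_mul _ _).symm
    _ = Y.det := detXY
    _ = J.det * Y.det * J.det := by
          have hJJ : J.det * J.det = 1 := by rw [← Matrix.det_mul, JJ, Matrix.det_one]
          calc Y.det = Y.det * (J.det * J.det) := by rw [hJJ, mul_one]
            _ = J.det * Y.det * J.det := by ring
    _ = (J * Y * J).det := by rw [Matrix.det_mul, Matrix.det_mul]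
    _ = _ := by rw [E3]
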